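/- Let 1 ≤ p < ∞. There exists a constant C > 0 such that for every μ-measurable function f on ℝ, ‖ y ↦ ‖f χ_{I(y,3)}‖_{L^∞(μ)} ‖_{L^p(μ)} ≤ C \widetilde{‖f‖}_{∞,p}. -/

import Mathlib

open MeasureTheory Set
open scoped ENNReal

/-- The weighted Lebesgue measure `dμ(x) = (2^{k+1} Γ(k+1))⁻¹ |x|^{2k+1} dx`. -/
noncomputable def dunklMeasure (k : ℝ) : Measure ℝ :=
  (volume : Measure ℝ).withDensity
    (fun x => ENNReal.ofReal ((2 ^ (k + 1) * Real.Gamma (k + 1))⁻¹ * |x| ^ (2 * k + 1)))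
/-- `Q_l = [l, l+1)`. -/
def Qcube (l : ℤ) : Set ℝ := Set.Ico (l : ℝ) ((l : ℝ) + 1)
/-- `I(x,r) = (x-r, x+r)`. -/
def Iv (x r : ℝ) : Set ℝ := Set.Ioo (x - r) (x + r)
/-- The discrete norm `\widetilde{‖f‖}_{q,p}`. -/
noncomputable def tNorm (k : ℝ) (q p : ℝ≥0∞) (f : ℝ → ℂ) : ℝ≥0∞ :=
  if p = ⊤ then ⨆ l : ℤ, eLpNorm ((Qcube l).indicator f) q (dunklMeasure k)
  else (∑' l : ℤ,
      dunklMeasure k (Qcube l) * (eLpNorm ((Qcube l).indicator f) q (dunklMeasure k)) ^ p.toReal)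
    ^ (1 / p.toReal)

namespace Stmt16Aux

lemma qcube_meas (l : ℤ) : MeasurableSet (Qcube l) := measurableSet_Ico

lemma qcube_disj : Pairwise (Function.onFun Disjoint Qcube) := by
  intro a b hab
  simp only [Function.onFun, Qcube]
  rw [Set.Ico_disjoint_Ico]
  rcases hab.lt_or_gt with h | h
  · have : (a : ℝ) + 1 ≤ b := by exact_mod_cast h
    calc min ((a:ℝ)+1) ((b:ℝ)+1) ≤ (a:ℝ)+1 := min_le_left _ _
      _ ≤ (b:ℝ) := this
      _ ≤ max (a:ℝ) (b:ℝ) := le_max_right _ _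
  · have : (b : ℝ) + 1 ≤ a := by exact_mod_cast h
    calc min ((a:ℝ)+1) ((b:ℝ)+1) ≤ (b:ℝ)+1 := min_le_right _ _
      _ ≤ (a:ℝ) := this
      _ ≤ max (a:ℝ) (b:ℝ) := le_max_left _ _

lemma qcube_cover : (⋃ l : ℤ, Qcube l) = univ := by
  ext x
  simp only [mem_iUnion, mem_univ, iff_true, Qcube, mem_Ico]
  exact ⟨⌊x⌋, Int.floor_le x, Int.lt_floor_add_one x⟩

variable {k : ℝ} (hk : -1/2 < k)

lemma c_pos (hk : -1/2 < k) : 0 < (2 ^ (k + 1) * Real.Gamma (k + 1))⁻¹ :=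
  inv_pos.mpr (mul_pos (Real.rpow_pos_of_pos two_pos _)
    (Real.Gamma_pos_of_pos (by linarith)))

lemma alpha_pos (hk : -1/2 < k) : 0 < 2 * k + 1 := by linarith

lemma measQ_le (hk : -1/2 < k) (l : ℤ) :
    dunklMeasure k (Qcube l) ≤
      ENNReal.ofReal ((2 ^ (k + 1) * Real.Gamma (k + 1))⁻¹) *
        ENNReal.ofReal ((|(l:ℝ)| + 1) ^ (2 * k + 1)) := by
  set c := (2 ^ (k + 1) * Real.Gamma (k + 1))⁻¹ with hc
  rw [dunklMeasure, withDensity_apply _ (qcube_meas l)]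
  calc ∫⁻ x in Qcube l, ENNReal.ofReal (c * |x| ^ (2*k+1)) ∂volume
      ≤ ∫⁻ _ in Qcube l, ENNReal.ofReal (c * (|(l:ℝ)| + 1) ^ (2*k+1)) ∂volume := by
        refine setLIntegral_mono' (qcube_meas l) fun x hx => ?_
        refine ENNReal.ofReal_le_ofReal ?_
        refine mul_le_mul_of_nonneg_left ?_ (c_pos hk).le
        refine Real.rpow_le_rpow (abs_nonneg _) ?_ (alpha_pos hk).le
        rcases hx with ⟨h1, h2⟩
        have := le_abs_self (l:ℝ); have := neg_abs_le (l:ℝ)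
        rw [abs_le]; constructor <;> linarith
    _ = ENNReal.ofReal (c * (|(l:ℝ)| + 1) ^ (2*k+1)) * volume (Qcube l) :=
        setLIntegral_const _ _
    _ = ENNReal.ofReal c * ENNReal.ofReal ((|(l:ℝ)| + 1) ^ (2*k+1)) := by
        have : volume (Qcube l) = 1 := by
          rw [Qcube, Real.volume_Ico]; simp
        rw [this, mul_one, ENNReal.ofReal_mul (c_pos hk).le]

lemma measQ_ge (hk : -1/2 < k) (l : ℤ) :
    ENNReal.ofReal ((2 ^ (k + 1) * Real.Gamma (k + 1))⁻¹) *
      ENNReal.ofReal (2⁻¹ * (max 2⁻¹ (|(l:ℝ)| - 2⁻¹)) ^ (2 * k + 1)) ≤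
    dunklMeasure k (Qcube l) := by
  set c := (2 ^ (k + 1) * Real.Gamma (k + 1))⁻¹ with hc
  set u := max 2⁻¹ (|(l:ℝ)| - 2⁻¹) with hu
  have hu0 : (0:ℝ) < u := lt_of_lt_of_le (by norm_num) (le_max_left _ _)
  have key : ∃ a : ℝ, Set.Ico a (a + 2⁻¹) ⊆ Qcube l ∧ ∀ x ∈ Set.Ico a (a + 2⁻¹), u ≤ |x| := by
    rcases le_or_gt 0 (l:ℤ) with h0 | h0
    · have h0' : (0:ℝ) ≤ (l:ℝ) := by exact_mod_cast h0
      refine ⟨(l:ℝ) + 2⁻¹, ?_, ?_⟩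
      · intro x hx; rcases hx with ⟨h1, h2⟩
        exact ⟨by linarith, by linarith⟩
      · intro x hx; rcases hx with ⟨h1, h2⟩
        have habs : |(l:ℝ)| = (l:ℝ) := abs_of_nonneg h0'
        have : (l:ℝ) + 2⁻¹ ≤ x := h1
        have hx0 : (0:ℝ) ≤ x := by linarith
        rw [abs_of_nonneg hx0, hu, habs]
        rcases max_cases (2⁻¹:ℝ) ((l:ℝ) - 2⁻¹) with ⟨he, _⟩ | ⟨he, _⟩ <;> rw [he] <;> linarith
    · have hl1 : (l:ℤ) ≤ -1 := by omega
      have h0' : (l:ℝ) ≤ -1 := by exact_mod_cast hl1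
      have habs : |(l:ℝ)| = -(l:ℝ) := abs_of_nonpos (by linarith)
      refine ⟨(l:ℝ), ?_, ?_⟩
      · intro x hx; rcases hx with ⟨h1, h2⟩
        exact ⟨h1, by linarith⟩
      · intro x hx; rcases hx with ⟨h1, h2⟩
        have hx0 : x ≤ 0 := by linarith
        rw [abs_of_nonpos hx0, hu, habs]
        have hmax : max (2⁻¹:ℝ) (-(l:ℝ) - 2⁻¹) = -(l:ℝ) - 2⁻¹ :=
          max_eq_right (by linarith)
        rw [hmax]; linarith
  obtain ⟨a, hsub, hlb⟩ := key
  rw [dunklMeasure, withDensity_apply _ (qcube_meas l)]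
  calc ENNReal.ofReal c * ENNReal.ofReal (2⁻¹ * u ^ (2*k+1))
      = ENNReal.ofReal (c * u ^ (2*k+1)) * ENNReal.ofReal ((a + 2⁻¹) - a) := by
        rw [← ENNReal.ofReal_mul (c_pos hk).le, ← ENNReal.ofReal_mul
          (mul_nonneg (c_pos hk).le (Real.rpow_nonneg hu0.le _))]
        congr 1; ring
    _ = ENNReal.ofReal (c * u ^ (2*k+1)) * volume (Set.Ico a (a + 2⁻¹)) := by
        rw [Real.volume_Ico]
    _ = ∫⁻ _ in Set.Ico a (a + 2⁻¹), ENNReal.ofReal (c * u ^ (2*k+1)) ∂volume := by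
        rw [setLIntegral_const]
    _ ≤ ∫⁻ x in Set.Ico a (a + 2⁻¹), ENNReal.ofReal (c * |x| ^ (2*k+1)) ∂volume := by
        refine setLIntegral_mono' measurableSet_Ico fun x hx => ?_
        refine ENNReal.ofReal_le_ofReal ?_
        refine mul_le_mul_of_nonneg_left ?_ (c_pos hk).le
        exact Real.rpow_le_rpow hu0.le (hlb x hx) (alpha_pos hk).le
    _ ≤ ∫⁻ x in Qcube l, ENNReal.ofReal (c * |x| ^ (2*k+1)) ∂volume :=
        lintegral_mono_set hsub

lemma doubling (hk : -1/2 < k) (m j : ℤ) (hj : |j| ≤ 3) :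
    dunklMeasure k (Qcube (m + j)) ≤
      ENNReal.ofReal (2 * 18 ^ (2 * k + 1)) * dunklMeasure k (Qcube m) := by
  refine le_trans (measQ_le hk (m + j)) ?_
  refine le_trans ?_ (mul_le_mul_right (measQ_ge hk m) _)
  set c := (2 ^ (k + 1) * Real.Gamma (k + 1))⁻¹ with hc
  set u := max 2⁻¹ (|(m:ℝ)| - 2⁻¹) with hu
  have hu0 : (0:ℝ) < u := lt_of_lt_of_le (by norm_num) (le_max_left _ _)
  rw [← ENNReal.ofReal_mul (c_pos hk).le, mul_comm (ENNReal.ofReal (2 * 18 ^ (2*k+1))),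
    mul_assoc, ← ENNReal.ofReal_mul (by positivity), ← ENNReal.ofReal_mul (c_pos hk).le]
  refine ENNReal.ofReal_le_ofReal ?_
  refine mul_le_mul_of_nonneg_left ?_ (c_pos hk).le
  have hrw : 2⁻¹ * u ^ (2*k+1) * (2 * 18 ^ (2*k+1)) = (18 * u) ^ (2*k+1) := by
    rw [Real.mul_rpow (by norm_num) hu0.le]; ring
  rw [hrw]
  refine Real.rpow_le_rpow (by positivity) ?_ (alpha_pos hk).le
  have hjr : |(j:ℝ)| ≤ 3 := by exact_mod_cast (by exact_mod_cast hj : |(j:ℤ)| ≤ 3)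
  have h1 : |((m:ℝ) + (j:ℝ))| ≤ |(m:ℝ)| + 3 := (abs_add_le _ _).trans (by linarith)
  have h2 : ((m + j : ℤ):ℝ) = (m:ℝ) + (j:ℝ) := by push_cast; ring
  rw [h2]
  rcases le_total (|(m:ℝ)|) 1 with hm | hm
  · have : (2⁻¹:ℝ) ≤ u := le_max_left _ _
    nlinarith
  · have : |(m:ℝ)| - 2⁻¹ ≤ u := le_max_right _ _
    nlinarith

lemma sum_rpow_le {ι : Type*} (s : Finset ι) (b : ι → ℝ≥0∞) (r : ℝ) (hr : 0 < r) :
    (∑ j ∈ s, b j) ^ r ≤ (s.card : ℝ≥0∞) ^ r * ∑ j ∈ s, b j ^ r := by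
  rcases s.eq_empty_or_nonempty with rfl | hs
  · simp [ENNReal.zero_rpow_of_pos hr]
  obtain ⟨j0, hj0, hsup⟩ := Finset.exists_mem_eq_sup s hs b
  calc (∑ j ∈ s, b j) ^ r ≤ ((s.card : ℝ≥0∞) * s.sup b) ^ r := by
        refine ENNReal.rpow_le_rpow ?_ hr.le
        have := Finset.sum_le_card_nsmul s b (s.sup b) (fun i hi => Finset.le_sup hi)
        simpa [nsmul_eq_mul] using this
    _ = (s.card : ℝ≥0∞) ^ r * (s.sup b) ^ r := ENNReal.mul_rpow_of_nonneg _ _ hr.le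
    _ ≤ (s.card : ℝ≥0∞) ^ r * ∑ j ∈ s, b j ^ r := by
        refine mul_le_mul_right ?_ _
        rw [hsup]
        exact Finset.single_le_sum (f := fun j => b j ^ r) (fun i _ => zero_le) hj0

end Stmt16Aux

open Stmt16Aux in
/-- For `1 ≤ p < ∞` there is `C > 0` with
`‖ y ↦ ‖f χ_{I(y,3)}‖_{L^∞(μ)} ‖_{L^p(μ)} ≤ C \widetilde{‖f‖}_{∞,p}` for every measurable `f`. -/
theorem stmt16 (k : ℝ) (hk : -1/2 < k) (p : ℝ≥0∞) (hp1 : 1 ≤ p) (hp : p ≠ ⊤) :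
    ∃ C : ℝ≥0∞, 0 < C ∧ C ≠ ⊤ ∧ ∀ f : ℝ → ℂ, Measurable f →
      (∫⁻ y, (eLpNorm ((Iv y 3).indicator f) ⊤ (dunklMeasure k)) ^ p.toReal
          ∂(dunklMeasure k)) ^ (1 / p.toReal) ≤ C * tNorm k ⊤ p f := by
  set μ := dunklMeasure k with hμ
  set pt := p.toReal with hpt
  have hpt1 : 1 ≤ pt := by
    rw [hpt, ← ENNReal.toReal_one]
    exact ENNReal.toReal_mono hp hp1
  have hpt0 : 0 < pt := lt_of_lt_of_le one_pos hpt1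
  set D := ENNReal.ofReal (2 * 18 ^ (2 * k + 1)) with hD
  have hD0 : D ≠ 0 := by
    rw [hD]
    simp only [ne_eq, ENNReal.ofReal_eq_zero, not_le]
    positivity
  have hDtop : D ≠ ⊤ := ENNReal.ofReal_ne_top
  have hbase0 : ((7:ℝ≥0∞) ^ pt * 7 * D) ≠ 0 := by
    refine mul_ne_zero (mul_ne_zero ?_ (by norm_num)) hD0
    exact (ENNReal.rpow_pos (by norm_num) (by norm_num)).ne'
  have hbasetop : ((7:ℝ≥0∞) ^ pt * 7 * D) ≠ ⊤ := by
    refine ENNReal.mul_ne_top (ENNReal.mul_ne_top ?_ (by norm_num)) hDtop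
    exact (ENNReal.rpow_lt_top_of_nonneg hpt0.le (by norm_num)).ne
  refine ⟨((7:ℝ≥0∞) ^ pt * 7 * D) ^ (1 / pt), ?_, ?_, ?_⟩
  · exact ENNReal.rpow_pos (pos_iff_ne_zero.mpr hbase0) hbasetop
  · exact (ENNReal.rpow_lt_top_of_nonneg (by positivity) hbasetop).ne
  intro f hf
  set a : ℤ → ℝ≥0∞ := fun m => eLpNorm ((Qcube m).indicator f) ⊤ μ with ha
  set S : ℝ≥0∞ := ∑' m : ℤ, μ (Qcube m) * a m ^ pt with hS
  have hRHS : tNorm k ⊤ p f = S ^ (1 / pt) := by rw [tNorm, if_neg hp]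
  set s : Finset ℤ := Finset.Icc (-3 : ℤ) 3 with hs
  have hcard : (s.card : ℝ≥0∞) = 7 := by rw [hs, Int.card_Icc]; rfl
  -- Step 1
  have step1 : ∀ y : ℝ, eLpNorm ((Iv y 3).indicator f) ⊤ μ ≤ ∑ j ∈ s, a (⌊y⌋ + j) := by
    intro y
    have hbd : ∀ x : ℝ, ‖(Iv y 3).indicator f x‖ ≤
        (∑ j ∈ s, fun x => ‖(Qcube (⌊y⌋ + j)).indicator f x‖) x := by
      intro x
      simp only [Finset.sum_apply]
      by_cases hx : x ∈ Iv y 3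
      · have hfloor : x ∈ Qcube ⌊x⌋ := ⟨Int.floor_le x, Int.lt_floor_add_one x⟩
        have hy1 : (⌊y⌋ : ℝ) ≤ y := Int.floor_le y
        have hy2 : y < ⌊y⌋ + 1 := Int.lt_floor_add_one y
        obtain ⟨hx1, hx2⟩ := hx
        have hj1 : ⌊y⌋ - 3 ≤ ⌊x⌋ := by
          refine Int.le_floor.mpr ?_
          push_cast; linarith
        have hj2 : ⌊x⌋ ≤ ⌊y⌋ + 3 := by
          have : ⌊x⌋ < ⌊y⌋ + 4 := by
            refine Int.floor_lt.mpr ?_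
            push_cast; linarith
          omega
        have hmem : ⌊x⌋ - ⌊y⌋ ∈ s := by rw [hs]; simp; omega
        have hsingle : ‖(Qcube (⌊y⌋ + (⌊x⌋ - ⌊y⌋))).indicator f x‖ ≤
            ∑ j ∈ s, ‖(Qcube (⌊y⌋ + j)).indicator f x‖ :=
          Finset.single_le_sum
            (f := fun j => ‖(Qcube (⌊y⌋ + j)).indicator f x‖)
            (fun i _ => norm_nonneg _) hmem
        have heq : ⌊y⌋ + (⌊x⌋ - ⌊y⌋) = ⌊x⌋ := by omega
        rw [heq] at hsingle
        calc ‖(Iv y 3).indicator f x‖ = ‖f x‖ := by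
              rw [Set.indicator_of_mem (by exact ⟨hx1, hx2⟩) f]
          _ = ‖(Qcube ⌊x⌋).indicator f x‖ := by rw [Set.indicator_of_mem hfloor]
          _ ≤ _ := hsingle
      · rw [Set.indicator_of_notMem hx]
        simp only [norm_zero]
        exact Finset.sum_nonneg fun i _ => norm_nonneg _
    calc eLpNorm ((Iv y 3).indicator f) ⊤ μ
        ≤ eLpNorm (∑ j ∈ s, fun x => ‖(Qcube (⌊y⌋ + j)).indicator f x‖) ⊤ μ :=
          eLpNorm_mono_real hbd
      _ ≤ ∑ j ∈ s, eLpNorm (fun x => ‖(Qcube (⌊y⌋ + j)).indicator f x‖) ⊤ μ :=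
          eLpNorm_sum_le (fun i _ =>
            ((hf.indicator (qcube_meas _)).norm).aestronglyMeasurable) le_top
      _ = ∑ j ∈ s, a (⌊y⌋ + j) := by
          refine Finset.sum_congr rfl fun j _ => ?_
          rw [ha]; exact eLpNorm_norm _
  -- Step 2: integral over each cube
  have hcube : ∀ l : ℤ, (∫⁻ y in Qcube l, (eLpNorm ((Iv y 3).indicator f) ⊤ μ) ^ pt ∂μ)
      ≤ μ (Qcube l) * ((7:ℝ≥0∞) ^ pt * ∑ j ∈ s, a (l + j) ^ pt) := by
    intro l
    calc (∫⁻ y in Qcube l, (eLpNorm ((Iv y 3).indicator f) ⊤ μ) ^ pt ∂μ)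
        ≤ ∫⁻ _ in Qcube l, ((7:ℝ≥0∞) ^ pt * ∑ j ∈ s, a (l + j) ^ pt) ∂μ := by
          refine setLIntegral_mono' (qcube_meas l) fun y hy => ?_
          have hfl : ⌊y⌋ = l := by
            rcases hy with ⟨h1, h2⟩
            exact Int.floor_eq_iff.mpr ⟨h1, h2⟩
          calc (eLpNorm ((Iv y 3).indicator f) ⊤ μ) ^ pt
              ≤ (∑ j ∈ s, a (⌊y⌋ + j)) ^ pt := ENNReal.rpow_le_rpow (step1 y) hpt0.le
            _ ≤ (s.card : ℝ≥0∞) ^ pt * ∑ j ∈ s, a (⌊y⌋ + j) ^ pt :=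
                sum_rpow_le s _ pt hpt0
            _ = (7:ℝ≥0∞) ^ pt * ∑ j ∈ s, a (l + j) ^ pt := by rw [hcard, hfl]
      _ = μ (Qcube l) * ((7:ℝ≥0∞) ^ pt * ∑ j ∈ s, a (l + j) ^ pt) := by
          rw [setLIntegral_const, mul_comm]
  -- Step 3: decompose the integral
  have hdecomp : (∫⁻ y, (eLpNorm ((Iv y 3).indicator f) ⊤ μ) ^ pt ∂μ)
      = ∑' l : ℤ, ∫⁻ y in Qcube l, (eLpNorm ((Iv y 3).indicator f) ⊤ μ) ^ pt ∂μ := by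
    rw [← setLIntegral_univ, ← qcube_cover, lintegral_iUnion qcube_meas qcube_disj]
  -- Step 4: shift sums
  have hshift : ∀ j ∈ s, (∑' l : ℤ, μ (Qcube l) * a (l + j) ^ pt) ≤ D * S := by
    intro j _
    have hjs : |(-j)| ≤ 3 := by
      have : j ∈ Finset.Icc (-3:ℤ) 3 := by assumption
      simp only [Finset.mem_Icc] at this
      rw [abs_le]
      omega
    have hre : (∑' l : ℤ, μ (Qcube l) * a (l + j) ^ pt)
        = ∑' m : ℤ, μ (Qcube (m - j)) * a m ^ pt := by
      rw [← (Equiv.subRight j).tsum_eq (fun l => μ (Qcube l) * a (l + j) ^ pt)]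
      refine tsum_congr fun m => ?_
      simp [Equiv.subRight, sub_add_cancel]
    rw [hre]
    calc ∑' m : ℤ, μ (Qcube (m - j)) * a m ^ pt
        ≤ ∑' m : ℤ, D * (μ (Qcube m) * a m ^ pt) := by
          refine ENNReal.tsum_le_tsum fun m => ?_
          rw [← mul_assoc]
          refine mul_le_mul_left ?_ _
          have := doubling hk m (-j) hjs
          rw [show m + -j = m - j by ring] at this
          exact this
      _ = D * S := by rw [ENNReal.tsum_mul_left, hS]
  -- Assemble
  have hmain : (∫⁻ y, (eLpNorm ((Iv y 3).indicator f) ⊤ μ) ^ pt ∂μ)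
      ≤ ((7:ℝ≥0∞) ^ pt * 7 * D) * S := by
    rw [hdecomp]
    calc ∑' l : ℤ, ∫⁻ y in Qcube l, (eLpNorm ((Iv y 3).indicator f) ⊤ μ) ^ pt ∂μ
        ≤ ∑' l : ℤ, μ (Qcube l) * ((7:ℝ≥0∞) ^ pt * ∑ j ∈ s, a (l + j) ^ pt) :=
          ENNReal.tsum_le_tsum hcube
      _ = (7:ℝ≥0∞) ^ pt * ∑' l : ℤ, ∑ j ∈ s, μ (Qcube l) * a (l + j) ^ pt := by
          rw [← ENNReal.tsum_mul_left]
          refine tsum_congr fun l => ?_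
          rw [mul_left_comm]
          congr 1
          exact Finset.mul_sum _ _ _
      _ = (7:ℝ≥0∞) ^ pt * ∑ j ∈ s, ∑' l : ℤ, μ (Qcube l) * a (l + j) ^ pt := by
          rw [Summable.tsum_finsetSum (fun j _ => ENNReal.summable)]
      _ ≤ (7:ℝ≥0∞) ^ pt * ∑ j ∈ s, (D * S) := by
          refine mul_le_mul_right (Finset.sum_le_sum hshift) _
      _ = ((7:ℝ≥0∞) ^ pt * 7 * D) * S := by
          rw [Finset.sum_const]
          have : s.card = 7 := by rw [hs, Int.card_Icc]; rfl
          rw [this]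
          simp only [nsmul_eq_mul]
          push_cast
          ring
  calc (∫⁻ y, (eLpNorm ((Iv y 3).indicator f) ⊤ μ) ^ pt ∂μ) ^ (1 / pt)
      ≤ (((7:ℝ≥0∞) ^ pt * 7 * D) * S) ^ (1 / pt) :=
        ENNReal.rpow_le_rpow hmain (by positivity)
    _ = ((7:ℝ≥0∞) ^ pt * 7 * D) ^ (1 / pt) * S ^ (1 / pt) :=
        ENNReal.mul_rpow_of_nonneg _ _ (by positivity)
    _ = ((7:ℝ≥0∞) ^ pt * 7 * D) ^ (1 / pt) * tNorm k ⊤ p f := by rw [hRHS]
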